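/- Let n ≥ 1 and let a₁,…,aₙ : ℝ → ℝ be continuous functions such that for every t ∈ ℝ the monic polynomial P(t)(x) = xⁿ - a₁(t)xⁿ⁻¹ + a₂(t)xⁿ⁻² - ⋯ + (-1)ⁿaₙ(t) has all roots real. Then there exists a continuous map x = (x₁,…,xₙ) : ℝ → ℝⁿ which is a parametrization of the roots of P, i.e. for each t ∈ ℝ the multiset {x₁(t),…,xₙ(t)} equals the multiset of roots of P(t) counted with multiplicity. -/

import Mathlib

open Polynomial

/-- The monic polynomial curve `P(t)(x) = xⁿ - a₁(t)xⁿ⁻¹ + a₂(t)xⁿ⁻² - ⋯ + (-1)ⁿ aₙ(t)`. -/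
noncomputable def curvePoly (n : ℕ) (a : ℕ → ℝ → ℝ) (t : ℝ) : Polynomial ℝ :=
  X ^ n + ∑ k ∈ Finset.Icc 1 n, C ((-1 : ℝ) ^ k * a k t) * X ^ (n - k)

/-- `x : T → ℝⁿ` parametrizes the roots of `P` on `T`: for each `t ∈ T` the multiset
`{x₁(t),…,xₙ(t)}` equals the multiset of roots of `P(t)` with multiplicity. -/
def IsRootParamOn (n : ℕ) (a : ℕ → ℝ → ℝ) (T : Set ℝ) (x : Fin n → ℝ → ℝ) : Prop :=
  ∀ t ∈ T, (curvePoly n a t).roots = Multiset.map (fun i => x i t) (Finset.univ : Finset (Fin n)).val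

lemma CRP.coeff_curvePoly {n : ℕ} (a : ℕ → ℝ → ℝ) (t : ℝ) {k : ℕ} (hk : k < n) :
    (curvePoly n a t).coeff k = (-1) ^ (n - k) * a (n - k) t := by
  unfold curvePoly
  rw [coeff_add, coeff_X_pow, if_neg hk.ne, zero_add, finset_sum_coeff]
  rw [Finset.sum_eq_single (n - k)]
  · rw [coeff_C_mul, coeff_X_pow, if_pos (by omega), mul_one]
  · intro j hj hne
    rw [coeff_C_mul, coeff_X_pow, if_neg, mul_zero]
    simp only [Finset.mem_Icc] at hj
    omega
  · intro h
    simp only [Finset.mem_Icc] at h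
    omega

lemma CRP.monic_curvePoly {n : ℕ} (hn : 1 ≤ n) (a : ℕ → ℝ → ℝ) (t : ℝ) :
    (curvePoly n a t).Monic := by
  apply monic_X_pow_add
  refine lt_of_le_of_lt ((Polynomial.degree_sum_le _ _).trans (Finset.sup_le ?_))
    ((Nat.cast_lt (α := WithBot ℕ)).mpr (by omega : n - 1 < n))
  intro k hk
  simp only [Finset.mem_Icc] at hk
  refine (degree_C_mul_X_pow_le _ _).trans ?_
  exact (Nat.cast_le (α := WithBot ℕ)).mpr (by omega : n - k ≤ n - 1)

lemma CRP.natDegree_curvePoly {n : ℕ} (hn : 1 ≤ n) (a : ℕ → ℝ → ℝ) (t : ℝ) :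
    (curvePoly n a t).natDegree = n := by
  have h : (curvePoly n a t).degree = n := by
    unfold curvePoly
    rw [degree_add_eq_left_of_degree_lt, degree_X_pow]
    rw [degree_X_pow]
    refine lt_of_le_of_lt ((Polynomial.degree_sum_le _ _).trans (Finset.sup_le ?_))
      ((Nat.cast_lt (α := WithBot ℕ)).mpr (by omega : n - 1 < n))
    intro k hk
    simp only [Finset.mem_Icc] at hk
    refine (degree_C_mul_X_pow_le _ _).trans ?_
    exact (Nat.cast_le (α := WithBot ℕ)).mpr (by omega : n - k ≤ n - 1)
  exact natDegree_eq_of_degree_eq_some h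

lemma CRP.root_bound {p : ℝ[X]} (hp : p.Monic) {x : ℝ} (hx : p.IsRoot x) :
    |x| ≤ max 1 (∑ k ∈ Finset.range p.natDegree, |p.coeff k|) := by
  set n := p.natDegree with hn
  rcases Nat.eq_zero_or_pos n with h0 | hpos
  · exfalso
    have hp1 : p = 1 := hp.natDegree_eq_zero.mp (hn ▸ h0)
    rw [hp1] at hx
    simp at hx
  by_contra hcon
  push_neg at hcon
  rw [max_lt_iff] at hcon
  obtain ⟨h1, hB⟩ := hcon
  have heval := hx
  rw [IsRoot, eval_eq_sum_range, Finset.sum_range_succ, ← hn, hp.coeff_natDegree, one_mul] at heval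
  have hxn : x ^ n = -∑ k ∈ Finset.range n, p.coeff k * x ^ k := by linarith [heval]
  have habs : |x| ^ n ≤ (∑ k ∈ Finset.range n, |p.coeff k|) * |x| ^ (n - 1) := by
    calc |x| ^ n = |x ^ n| := (abs_pow x n).symm
    _ = |∑ k ∈ Finset.range n, p.coeff k * x ^ k| := by rw [hxn, abs_neg]
    _ ≤ ∑ k ∈ Finset.range n, |p.coeff k * x ^ k| := Finset.abs_sum_le_sum_abs _ _
    _ ≤ ∑ k ∈ Finset.range n, |p.coeff k| * |x| ^ (n - 1) := by
        refine Finset.sum_le_sum fun k hk => ?_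
        rw [abs_mul, abs_pow]
        refine mul_le_mul_of_nonneg_left ?_ (abs_nonneg _)
        exact pow_le_pow_right₀ h1.le (by simp at hk; omega)
    _ = (∑ k ∈ Finset.range n, |p.coeff k|) * |x| ^ (n - 1) := (Finset.sum_mul _ _ _).symm
  have hlt : (∑ k ∈ Finset.range n, |p.coeff k|) * |x| ^ (n - 1) < |x| * |x| ^ (n - 1) :=
    mul_lt_mul_of_pos_right hB (pow_pos (lt_trans one_pos h1) _)
  have : |x| * |x| ^ (n - 1) = |x| ^ n := by
    rw [← pow_succ']
    congr 1
    omega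
  linarith

lemma CRP.monotone_eq_of_map_eq {n : ℕ} {x y : Fin n → ℝ} (hx : Monotone x) (hy : Monotone y)
    (h : Multiset.map x Finset.univ.val = Multiset.map y Finset.univ.val) : x = y := by
  have key : ∀ z : Fin n → ℝ, (↑(List.ofFn z) : Multiset ℝ) = Multiset.map z Finset.univ.val := by
    intro z
    rw [List.ofFn_eq_map]
    rfl
  apply List.ofFn_injective
  refine List.Perm.eq_of_sortedLE (List.sortedLE_ofFn_iff.mpr hx) (List.sortedLE_ofFn_iff.mpr hy) ?_
  rw [← Multiset.coe_eq_coe, key, key, h]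

noncomputable def CRP.esymmMap (n : ℕ) (x : Fin n → ℝ) : Fin n → ℝ :=
  fun k => ∑ A ∈ Finset.powersetCard ((k : ℕ) + 1) Finset.univ, ∏ i ∈ A, x i

lemma CRP.continuous_esymmMap (n : ℕ) : Continuous (CRP.esymmMap n) := by
  refine continuous_pi fun k => ?_
  exact continuous_finset_sum _ fun A _ => continuous_finset_prod _ fun i _ => continuous_apply i

lemma CRP.esymmMap_eq_esymm {n : ℕ} (x : Fin n → ℝ) (k : Fin n) :
    CRP.esymmMap n x k = (Multiset.map x Finset.univ.val).esymm ((k : ℕ) + 1) := by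
  rw [Finset.esymm_map_val]
  rfl

lemma CRP.esymmMap_injOn (n : ℕ) :
    Set.InjOn (CRP.esymmMap n) {x | Monotone x} := by
  intro x hx y hy h
  have hcard : ∀ z : Fin n → ℝ, Multiset.card (Multiset.map z Finset.univ.val) = n := by
    intro z; simp
  have hpoly : ((Multiset.map x Finset.univ.val).map fun r => X - C r).prod
      = ((Multiset.map y Finset.univ.val).map fun r => X - C r).prod := by
    have hdeg : ∀ z : Fin n → ℝ,
        (((Multiset.map z Finset.univ.val).map fun r => X - C r).prod).natDegree = n := by
      intro z
      rw [natDegree_multiset_prod_X_sub_C_eq_card, hcard]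
    ext m
    rcases lt_trichotomy m n with hm | hm | hm
    · rw [Multiset.prod_X_sub_C_coeff _ (by rw [hcard]; omega),
        Multiset.prod_X_sub_C_coeff _ (by rw [hcard]; omega), hcard, hcard]
      have h1 : 1 ≤ n - m := by omega
      have hk : n - m - 1 < n := by omega
      have := congrFun h ⟨n - m - 1, hk⟩
      rw [CRP.esymmMap_eq_esymm, CRP.esymmMap_eq_esymm] at this
      simp only at this
      rw [show n - m - 1 + 1 = n - m from by omega] at this
      rw [this]
    · subst hm
      rw [Multiset.prod_X_sub_C_coeff _ (le_of_eq (hcard x).symm),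
        Multiset.prod_X_sub_C_coeff _ (le_of_eq (hcard y).symm), hcard, hcard,
        Nat.sub_self]
      simp [Multiset.esymm]
    · rw [coeff_eq_zero_of_natDegree_lt (by rw [hdeg]; omega),
        coeff_eq_zero_of_natDegree_lt (by rw [hdeg]; omega)]
  have := congrArg Polynomial.roots hpoly
  rw [roots_multiset_prod_X_sub_C, roots_multiset_prod_X_sub_C] at this
  exact CRP.monotone_eq_of_map_eq hx hy this

lemma CRP.isClosed_monotone (n : ℕ) : IsClosed {x : Fin n → ℝ | Monotone x} := by
  have : {x : Fin n → ℝ | Monotone x}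
      = ⋂ (p : Fin n × Fin n) (_ : p.1 ≤ p.2), {x | x p.1 ≤ x p.2} := by
    ext x
    simp only [Set.mem_setOf_eq, Set.mem_iInter]
    exact ⟨fun h p hp => h hp, fun h i j hij => h (i, j) hij⟩
  rw [this]
  exact isClosed_iInter fun p => isClosed_iInter fun _ =>
    isClosed_le (continuous_apply _) (continuous_apply _)

theorem continuous_root_parametrization
    (n : ℕ) (hn : 1 ≤ n) (a : ℕ → ℝ → ℝ)
    (hcont : ∀ k ∈ Finset.Icc 1 n, Continuous (a k))
    (hreal : ∀ t : ℝ, ((curvePoly n a t).roots).card = n) :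
    ∃ x : Fin n → ℝ → ℝ, (∀ i, Continuous (x i)) ∧
      IsRootParamOn n a Set.univ x := by
  classical
  have hmonic : ∀ t, (curvePoly n a t).Monic := fun t => CRP.monic_curvePoly hn a t
  have hdeg : ∀ t, (curvePoly n a t).natDegree = n := fun t => CRP.natDegree_curvePoly hn a t
  -- sorted roots
  have hlen : ∀ t, ((curvePoly n a t).roots.sort (· ≤ ·)).length = n := by
    intro t; rw [Multiset.length_sort, hreal t]
  let f : ℝ → Fin n → ℝ := fun t i =>
    ((curvePoly n a t).roots.sort (· ≤ ·)).get (Fin.cast (hlen t).symm i)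
  have hmono : ∀ t, Monotone (f t) := by
    intro t i j hij
    exact List.SortedLE.monotone_get (Multiset.pairwise_sort _ _).sortedLE (by simpa using hij)
  have hmap : ∀ t, Multiset.map (f t) Finset.univ.val = (curvePoly n a t).roots := by
    intro t
    have key : ∀ z : Fin n → ℝ, Multiset.map z Finset.univ.val = (↑(List.ofFn z) : Multiset ℝ) := by
      intro z; rw [List.ofFn_eq_map]; rfl
    rw [key]
    rw [← Multiset.sort_eq (curvePoly n a t).roots (· ≤ ·)]
    congr 1
    apply List.ext_get (by simp [hlen t])
    intro i h1 h2
    simp [f, List.get_ofFn]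
  -- esymm composed with f equals coefficients
  have hesymm : ∀ (t : ℝ) (k : Fin n), CRP.esymmMap n (f t) k = a ((k : ℕ) + 1) t := by
    intro t k
    have hk1 : (k : ℕ) + 1 ≤ n := k.isLt
    have h1 : CRP.esymmMap n (f t) k = ((curvePoly n a t).roots).esymm ((k : ℕ) + 1) := by
      rw [CRP.esymmMap_eq_esymm, hmap t]
    have hcards : Multiset.card (curvePoly n a t).roots = n := hreal t
    have h3 : (curvePoly n a t).coeff (n - ((k : ℕ) + 1))
        = (-1) ^ ((k : ℕ) + 1) * ((curvePoly n a t).roots).esymm ((k : ℕ) + 1) := by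
      conv_lhs => rw [← prod_multiset_X_sub_C_of_monic_of_roots_card_eq (hmonic t)
        ((hreal t).trans (hdeg t).symm)]
      rw [Multiset.prod_X_sub_C_coeff _ (by rw [hcards]; omega), hcards,
        show n - (n - ((k : ℕ) + 1)) = (k : ℕ) + 1 from by omega]
    have h2 : (curvePoly n a t).coeff (n - ((k : ℕ) + 1))
        = (-1) ^ ((k : ℕ) + 1) * a ((k : ℕ) + 1) t := by
      rw [CRP.coeff_curvePoly a t (by omega : n - ((k : ℕ) + 1) < n),
        show n - (n - ((k : ℕ) + 1)) = (k : ℕ) + 1 from by omega]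
    rw [h1]
    have := h3.symm.trans h2
    exact mul_left_cancel₀ (pow_ne_zero _ (by norm_num : (-1 : ℝ) ≠ 0)) this
  -- continuity of f
  have hfc : Continuous f := by
    rw [continuous_iff_continuousAt]
    intro t₀
    set s : Set ℝ := Set.Icc (t₀ - 1) (t₀ + 1) with hs
    have hscomp : IsCompact s := isCompact_Icc
    have hsne : s.Nonempty := ⟨t₀, by constructor <;> linarith⟩
    have hφc : ContinuousOn (fun t => ∑ j ∈ Finset.Icc 1 n, |a j t|) s := by
      apply Continuous.continuousOn
      exact continuous_finset_sum _ fun j hj => (hcont j hj).abs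
    obtain ⟨z, hz, hzmax'⟩ := hscomp.exists_isMaxOn hsne hφc
    have hzmax : ∀ t ∈ s, (∑ j ∈ Finset.Icc 1 n, |a j t|) ≤ ∑ j ∈ Finset.Icc 1 n, |a j z| :=
      fun t ht => hzmax' ht
    set R : ℝ := max 1 (∑ j ∈ Finset.Icc 1 n, |a j z|) with hR
    -- bound on roots for t ∈ s
    have hbound : ∀ t ∈ s, ∀ i, |f t i| ≤ R := by
      intro t ht i
      have hroot : (curvePoly n a t).IsRoot (f t i) := by
        apply isRoot_of_mem_roots
        rw [← hmap t]
        exact Multiset.mem_map_of_mem _ (Finset.mem_univ i)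
      have h1 := CRP.root_bound (hmonic t) hroot
      have h2 : ∑ k ∈ Finset.range (curvePoly n a t).natDegree, |(curvePoly n a t).coeff k|
          = ∑ j ∈ Finset.Icc 1 n, |a j t| := by
        rw [hdeg t]
        refine Finset.sum_nbij' (fun k => n - k) (fun j => n - j) ?_ ?_ ?_ ?_ ?_
        · intro k hk; simp only [Finset.mem_range] at hk; simp only [Finset.mem_Icc]; omega
        · intro j hj; simp only [Finset.mem_Icc] at hj; simp only [Finset.mem_range]; omega
        · intro k hk; simp only [Finset.mem_range] at hk; show n - (n - k) = k; omega
        · intro j hj; simp only [Finset.mem_Icc] at hj; show n - (n - j) = j; omega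
        · intro k hk
          simp only [Finset.mem_range] at hk
          rw [CRP.coeff_curvePoly a t hk, abs_mul, abs_pow, abs_neg, abs_one, one_pow, one_mul]
      rw [h2] at h1
      refine h1.trans (max_le_max le_rfl (hzmax t ht))
    -- the compact set S
    set S : Set (Fin n → ℝ) := {x | Monotone x ∧ ∀ i, |x i| ≤ R} with hSdef
    have hSclosed : IsClosed S := by
      have : S = {x : Fin n → ℝ | Monotone x} ∩ ⋂ i, {x | |x i| ≤ R} := by
        ext x
        simp only [hSdef, Set.mem_setOf_eq, Set.mem_inter_iff, Set.mem_iInter]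
      rw [this]
      exact (CRP.isClosed_monotone n).inter
        (isClosed_iInter fun i => isClosed_le ((continuous_apply i).abs) continuous_const)
    have hScomp : IsCompact S := by
      refine (isCompact_univ_pi fun _ : Fin n => isCompact_Icc (a := -R) (b := R)).of_isClosed_subset
        hSclosed ?_
      intro x hx
      simp only [Set.mem_univ_pi, Set.mem_Icc]
      intro i
      exact abs_le.mp (hx.2 i)
    have : CompactSpace S := isCompact_iff_compactSpace.mp hScomp
    -- the embedding
    set Emap : S → (Fin n → ℝ) := fun x => CRP.esymmMap n x.1 with hEmap
    have hEmb := Continuous.isClosedEmbedding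
      ((CRP.continuous_esymmMap n).comp continuous_subtype_val : Continuous Emap)
      (fun x y hxy => Subtype.ext (CRP.esymmMap_injOn n x.2.1 y.2.1 hxy))
    have hmem : ∀ u : s, f u ∈ S := fun u => ⟨hmono u, fun i => hbound u u.2 i⟩
    have hcg : Continuous fun u : s => (⟨f u, hmem u⟩ : S) := by
      rw [hEmb.toIsEmbedding.toIsInducing.continuous_iff]
      have heq : ((CRP.esymmMap n ∘ Subtype.val) ∘ fun u : s => (⟨f u, hmem u⟩ : S))
          = fun u : s => fun k : Fin n => a ((k : ℕ) + 1) (u : ℝ) := by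
        funext u
        exact funext fun k => hesymm u k
      rw [heq]
      refine continuous_pi fun k => ?_
      refine (hcont ((k : ℕ) + 1) ?_).comp continuous_subtype_val
      simp only [Finset.mem_Icc]
      exact ⟨by omega, k.isLt⟩
    have hrest : ContinuousOn f s := by
      rw [continuousOn_iff_continuous_restrict]
      exact continuous_subtype_val.comp hcg
    exact hrest.continuousAt (Icc_mem_nhds (by linarith) (by linarith))
  refine ⟨fun i t => f t i, fun i => (continuous_apply i).comp hfc, fun t _ => (hmap t).symm⟩
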